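/- Let α > 0 and let f : (0,∞) → ℝ be given by f(x) = x/(α + x). Then for every integer n ≥ 2 and all pairwise distinct x_1, …, x_n ∈ (0,∞), one has 0 < −Σ_{i=1}^n f(x_i) / Π_{j≠i} (x_j − x_i) < 1/α^(n−1). -/

import Mathlib

open Finset Polynomial

lemma leadingCoeff_lagrange_basis {s : Finset ℝ} {i : ℝ} :
    (Lagrange.basis s id i).leadingCoeff = ∏ j ∈ s.erase i, (i - j)⁻¹ := by
  unfold Lagrange.basis
  rw [leadingCoeff_prod]
  refine Finset.prod_congr rfl fun j hj => ?_
  have hij : (i : ℝ) ≠ j := fun h => (mem_erase.mp hj).1 h.symm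
  unfold Lagrange.basisDivisor
  rw [leadingCoeff_mul, leadingCoeff_C, (monic_X_sub_C (id j : ℝ)).leadingCoeff, mul_one]
  simp

lemma key_sum_zero {s : Finset ℝ} (hs : 2 ≤ s.card) :
    ∑ i ∈ s, ∏ j ∈ s.erase i, (i - j)⁻¹ = 0 := by
  have hne : s.Nonempty := card_pos.mp (by omega)
  have h := Lagrange.sum_basis (v := (id : ℝ → ℝ)) Function.injective_id.injOn hne
  have hcoeff := congrArg (fun p => Polynomial.coeff p (s.card - 1)) h
  simp only [Polynomial.finset_sum_coeff] at hcoeff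
  rw [Polynomial.coeff_one, if_neg (by omega)] at hcoeff
  rw [← hcoeff]
  refine Finset.sum_congr rfl fun i hi => ?_
  have hnd := Lagrange.natDegree_basis Function.injective_id.injOn hi
  rw [← hnd, Polynomial.coeff_natDegree, leadingCoeff_lagrange_basis]

lemma key_sum_zero' {s : Finset ℝ} (hs : 2 ≤ s.card) :
    ∑ i ∈ s, ∏ j ∈ s.erase i, (j - i)⁻¹ = 0 := by
  have h : ∑ i ∈ s, (-1 : ℝ) ^ (s.card - 1) * ∏ j ∈ s.erase i, (i - j)⁻¹ = 0 := by
    rw [← Finset.mul_sum, key_sum_zero hs, mul_zero]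
  rw [← h]
  refine Finset.sum_congr rfl fun i hi => ?_
  rw [← Finset.card_erase_of_mem hi, ← Finset.prod_const, ← Finset.prod_mul_distrib]
  refine Finset.prod_congr rfl fun j hj => ?_
  rw [show j - i = -(i - j) by ring, inv_neg]
  ring

theorem self_div_add_divided_difference_bounds (α : ℝ) (hα : 0 < α)
    (f : ℝ → ℝ) (hfdef : ∀ x ∈ Set.Ioi (0 : ℝ), f x = x / (α + x))
    (n : ℕ) (hn : 2 ≤ n) (x : Fin n → ℝ) (hx : ∀ i, x i ∈ Set.Ioi (0 : ℝ))
    (hinj : Function.Injective x) :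
    0 < -∑ i, f (x i) / ∏ j ∈ Finset.univ.erase i, (x j - x i) ∧
    -∑ i, f (x i) / ∏ j ∈ Finset.univ.erase i, (x j - x i) < 1 / α ^ (n - 1) := by
  have hxpos : ∀ i, 0 < x i := fun i => hx i
  have hα' : ∀ i, 0 < α + x i := fun i => by have := hxpos i; linarith
  set t : Finset ℝ := Finset.image x Finset.univ with ht
  have htc : t.card = n := by
    rw [ht, Finset.card_image_of_injective _ hinj, Finset.card_univ, Fintype.card_fin]
  have hαt : (-α) ∉ t := by
    simp only [ht, Finset.mem_image, Finset.mem_univ, true_and, not_exists]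
    intro i h
    have := hxpos i; linarith
  have hprod : ∀ (i : Fin n) (g : ℝ → ℝ),
      ∏ z ∈ t.erase (x i), g z = ∏ j ∈ Finset.univ.erase i, g (x j) := by
    intro i g
    rw [ht, ← Finset.image_erase hinj, Finset.prod_image (fun a _ b _ h => hinj h)]
  -- B identity: sum of inverse products is zero
  have hB : ∑ i, ∏ j ∈ Finset.univ.erase i, (x j - x i)⁻¹ = 0 := by
    have h := key_sum_zero' (s := t) (by omega)
    rw [ht, Finset.sum_image (fun a _ b _ h => hinj h)] at h
    rw [← h]
    exact Finset.sum_congr rfl fun i _ => (hprod i (fun z => (z - x i)⁻¹)).symm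
  -- A identity via the augmented point set
  have hA : ∑ i, (α + x i)⁻¹ * ∏ j ∈ Finset.univ.erase i, (x j - x i)⁻¹
      = ∏ i, (α + x i)⁻¹ := by
    have hcard : 2 ≤ (insert (-α) t).card := by
      rw [Finset.card_insert_of_notMem hαt, htc]; omega
    have h := key_sum_zero' hcard
    rw [Finset.sum_insert hαt, Finset.erase_insert hαt] at h
    have hterm : ∀ y ∈ t, ∏ z ∈ (insert (-α) t).erase y, (z - y)⁻¹
        = (-α - y)⁻¹ * ∏ z ∈ t.erase y, (z - y)⁻¹ := by
      intro y hy
      have hyα : y ≠ -α := fun hh => hαt (hh ▸ hy)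
      rw [Finset.erase_insert_of_ne (Ne.symm hyα),
        Finset.prod_insert (fun hc => hαt (Finset.erase_subset _ _ hc))]
    rw [Finset.sum_congr rfl hterm] at h
    rw [ht, Finset.sum_image (fun a _ b _ h => hinj h),
      Finset.prod_image (fun a _ b _ h => hinj h)] at h
    have h2 : ∑ i, (-α - x i)⁻¹ * ∏ z ∈ t.erase (x i), (z - x i)⁻¹
        = -∑ i, (α + x i)⁻¹ * ∏ j ∈ Finset.univ.erase i, (x j - x i)⁻¹ := by
      rw [← Finset.sum_neg_distrib]
      refine Finset.sum_congr rfl fun i _ => ?_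
      rw [hprod i (fun z => (z - x i)⁻¹), show -α - x i = -(α + x i) by ring, inv_neg]
      ring
    rw [h2] at h
    have h3 : ∏ i : Fin n, (x i - -α)⁻¹ = ∏ i, (α + x i)⁻¹ := by
      refine Finset.prod_congr rfl fun i _ => by ring_nf
    rw [h3] at h
    linarith
  -- compute the sum exactly
  have hS : ∑ i, f (x i) / ∏ j ∈ Finset.univ.erase i, (x j - x i)
      = -(α * ∏ i, (α + x i)⁻¹) := by
    have hterm : ∀ i : Fin n, f (x i) / ∏ j ∈ Finset.univ.erase i, (x j - x i)
        = ∏ j ∈ Finset.univ.erase i, (x j - x i)⁻¹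
          - α * ((α + x i)⁻¹ * ∏ j ∈ Finset.univ.erase i, (x j - x i)⁻¹) := by
      intro i
      rw [hfdef (x i) (hx i), div_eq_mul_inv, ← Finset.prod_inv_distrib]
      have hne : α + x i ≠ 0 := (hα' i).ne'
      have h1 : x i / (α + x i) = 1 - α * (α + x i)⁻¹ := by
        field_simp
        ring
      rw [h1]; ring
    rw [Finset.sum_congr rfl (fun i _ => hterm i), Finset.sum_sub_distrib, hB,
      ← Finset.mul_sum, hA, zero_sub]
  rw [hS, neg_neg]
  set P : ℝ := ∏ i, (α + x i) with hPdef
  have hProdinv : ∏ i, (α + x i)⁻¹ = P⁻¹ := by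
    rw [hPdef, Finset.prod_inv_distrib]
  have hP : 0 < P := Finset.prod_pos fun i _ => hα' i
  have hne : (Finset.univ : Finset (Fin n)).Nonempty :=
    ⟨⟨0, by omega⟩, Finset.mem_univ _⟩
  have hPn : α ^ n < P := by
    calc α ^ n = ∏ _i : Fin n, α := by
          rw [Finset.prod_const, Finset.card_univ, Fintype.card_fin]
      _ < P := Finset.prod_lt_prod_of_nonempty (fun i _ => hα)
          (fun i _ => by have := hxpos i; linarith) hne
  constructor
  · rw [hProdinv]; positivity
  · rw [hProdinv, mul_comm, ← div_eq_inv_mul]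
    rw [div_lt_div_iff₀ hP (by positivity)]
    have : α * α ^ (n - 1) = α ^ n := by
      rw [← pow_succ']
      congr 1
      omega
    nlinarith [hPn]
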